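/- Every locally convex semitopological cone is convex-T0: for any two distinct points a, b there exists a lower semicontinuous linear functional Λ : C → [0,∞] with Λ(a) ≠ Λ(b). -/

import Mathlib

open Set ENNReal NNReal TopologicalSpace MeasureTheory
open scoped Classical

/-- A continuous valuation on a topological space `X`: a strict, monotone, modular,
Scott-continuous map from the open sets of `X` to `ℝ≥0∞`. -/
structure ContValuation (X : Type*) [TopologicalSpace X] where
  toFun : Opens X → ℝ≥0∞
  strict' : toFun ⊥ = 0
  mono' : ∀ U V : Opens X, U ≤ V → toFun U ≤ toFun V
  modular' : ∀ U V : Opens X, toFun U + toFun V = toFun (U ⊔ V) + toFun (U ⊓ V)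
  scott' : ∀ S : Set (Opens X), S.Nonempty → DirectedOn (· ≤ ·) S →
    toFun (sSup S) = ⨆ U ∈ S, toFun U

/-- The stochastic order on continuous valuations: pointwise order on open sets. -/
def stochLE {X : Type*} [TopologicalSpace X] (μ ν : ContValuation X) : Prop :=
  ∀ U : Opens X, μ.toFun U ≤ ν.toFun U

/-- The Scott topology on the nonnegative reals: opens are the rays `(r, ∞)`. -/
def scottNNReal : TopologicalSpace ℝ≥0 :=
  .generateFrom {s | ∃ r : ℝ≥0, s = Set.Ioi r}

section ConeDefs
variable (C : Type*) [AddCommMonoid C] [Module ℝ≥0 C] [TopologicalSpace C]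

variable {C} in
/-- A subset `A` of a cone is convex if `t•a + (1−t)•b ∈ A` for all `a, b ∈ A`, `t ∈ [0,1]`. -/
def IsConvexSet (A : Set C) : Prop :=
  ∀ a ∈ A, ∀ b ∈ A, ∀ t : ℝ≥0, t ≤ 1 → t • a + (1 - t) • b ∈ A

variable {C} in
/-- A half-space of a cone: a convex set with convex complement. -/
def IsHalfSpace (A : Set C) : Prop := IsConvexSet A ∧ IsConvexSet Aᶜ

/-- A cone is semitopological when addition and scalar multiplication are separately
continuous (scalars carrying the Scott topology of `ℝ≥0`). -/
def SeparatelyContinuousCone : Prop :=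
  (∀ a : C, Continuous fun b : C => a + b) ∧
  (∀ r : ℝ≥0, Continuous fun x : C => r • x) ∧
  (∀ x : C, @Continuous ℝ≥0 C scottNNReal _ fun r => r • x)

/-- A cone is topological when addition and scalar multiplication are jointly continuous
(scalars carrying the Scott topology of `ℝ≥0`). -/
def JointlyContinuousCone : Prop :=
  Continuous (fun p : C × C => p.1 + p.2) ∧
  @Continuous (ℝ≥0 × C) C (@instTopologicalSpaceProd _ _ scottNNReal _) _
    (fun p => p.1 • p.2)

/-- A cone is locally linear when its topology has a subbase of open half-spaces. -/
def LocallyLinearCone : Prop :=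
  ‹TopologicalSpace C› = .generateFrom {A : Set C | IsOpen A ∧ IsHalfSpace A}

/-- A cone is locally convex when each point has a neighbourhood basis of open convex
sets. -/
def LocallyConvexCone : Prop :=
  ∀ (x : C) (U : Set C), IsOpen U → x ∈ U → ∃ V, IsOpen V ∧ IsConvexSet V ∧ x ∈ V ∧ V ⊆ U

/-- A cone is weakly locally convex when every open neighbourhood of a point contains a
(not necessarily open) convex neighbourhood of that point. -/
def WeaklyLocallyConvexCone : Prop :=
  ∀ (x : C) (U : Set C), IsOpen U → x ∈ U → ∃ V ∈ nhds x, IsConvexSet V ∧ V ⊆ U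

variable {C} in
/-- A linear functional on a cone, valued in `[0,∞]`. -/
def IsLinearFunctional (Λ : C → ℝ≥0∞) : Prop :=
  ∀ (r s : ℝ≥0) (x y : C), Λ (r • x + s • y) = (r : ℝ≥0∞) * Λ x + (s : ℝ≥0∞) * Λ y

/-- A cone is convex-T0 when any two distinct points are separated by a lower
semicontinuous linear functional into `[0,∞]`. -/
def ConvexT0 : Prop :=
  ∀ a b : C, a ≠ b →
    ∃ Λ : C → ℝ≥0∞, LowerSemicontinuous Λ ∧ IsLinearFunctional Λ ∧ Λ a ≠ Λ b

end ConeDefs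

section Aux

open TopologicalSpace

/-- Scott-open subsets of `ℝ≥0` are upper sets. -/
private lemma scott_isUpperSet {U : Set ℝ≥0}
    (hU : GenerateOpen {s | ∃ r : ℝ≥0, s = Set.Ioi r} U) : IsUpperSet U := by
  induction hU with
  | basic s hs => obtain ⟨r, rfl⟩ := hs; exact isUpperSet_Ioi r
  | univ => exact isUpperSet_univ
  | inter s t _ _ ihs iht => exact ihs.inter iht
  | sUnion S _ ih => exact isUpperSet_sUnion ih

/-- The only Scott-open subset of `ℝ≥0` containing `0` is the whole space. -/
private lemma scott_zero_mem {U : Set ℝ≥0}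
    (hU : GenerateOpen {s | ∃ r : ℝ≥0, s = Set.Ioi r} U) (h0 : (0 : ℝ≥0) ∈ U) :
    U = Set.univ := by
  induction hU with
  | basic s hs =>
    obtain ⟨r, rfl⟩ := hs
    exact absurd h0 (by simp)
  | univ => rfl
  | inter s t _ _ ihs iht => rw [ihs h0.1, iht h0.2]; simp
  | sUnion S _ ih =>
    obtain ⟨t, htS, h0t⟩ := h0
    exact Set.eq_univ_of_univ_subset ((ih t htS h0t) ▸ Set.subset_sUnion_of_mem htS)

/-- A Scott-open subset of `ℝ≥0` containing `1` contains some `t` with `0 < t < 1`. -/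
private lemma scott_one_mem {U : Set ℝ≥0}
    (hU : GenerateOpen {s | ∃ r : ℝ≥0, s = Set.Ioi r} U) (h1 : (1 : ℝ≥0) ∈ U) :
    ∃ t : ℝ≥0, 0 < t ∧ t < 1 ∧ t ∈ U := by
  induction hU with
  | basic s hs =>
    obtain ⟨r, rfl⟩ := hs
    have hr1 : r < 1 := h1
    refine ⟨(r + 1) / 2, ?_, ?_, ?_⟩
    · have : (0 : ℝ≥0) < r + 1 := by positivity
      exact div_pos this (by norm_num)
    · rw [div_lt_one (by norm_num)]
      calc r + 1 < 1 + 1 := add_lt_add_of_lt_of_le hr1 le_rfl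
        _ = 2 := one_add_one_eq_two
    · show r < (r + 1) / 2
      rw [lt_div_iff₀ (by norm_num : (0:ℝ≥0) < 2)]
      calc r * 2 = r + r := by ring
        _ < r + 1 := add_lt_add_of_le_of_lt le_rfl hr1
  | univ =>
    refine ⟨1 / 2, by norm_num, ?_, Set.mem_univ _⟩
    rw [div_lt_one (by norm_num : (0:ℝ≥0) < 2)]; norm_num
  | inter s t hs ht ihs iht =>
    obtain ⟨t₁, ht₁0, ht₁1, ht₁⟩ := ihs h1.1
    obtain ⟨t₂, ht₂0, ht₂1, ht₂⟩ := iht h1.2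
    refine ⟨max t₁ t₂, lt_max_of_lt_left ht₁0, max_lt ht₁1 ht₂1,
      scott_isUpperSet hs (le_max_left _ _) ht₁, scott_isUpperSet ht (le_max_right _ _) ht₂⟩
  | sUnion S hS ih =>
    obtain ⟨t, htS, h1t⟩ := h1
    obtain ⟨u, hu0, hu1, hu⟩ := ih t htS h1t
    exact ⟨u, hu0, hu1, t, htS, hu⟩

variable {C : Type*} [AddCommMonoid C] [Module ℝ≥0 C] [TopologicalSpace C]

/-- In a semitopological cone, open sets absorb addition: if `h ∈ H` then `h + w ∈ H`. -/
private lemma open_absorb (hsep : SeparatelyContinuousCone C) {H : Set C}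
    (hH : IsOpen H) {h : C} (hh : h ∈ H) (w : C) : h + w ∈ H := by
  have hcont : @Continuous ℝ≥0 C scottNNReal _ (fun t : ℝ≥0 => h + t • w) :=
    @Continuous.comp ℝ≥0 C C scottNNReal _ _ _ _ (hsep.1 h) (hsep.2.2 w)
  have hopen : GenerateOpen {s | ∃ r : ℝ≥0, s = Set.Ioi r}
      ((fun t : ℝ≥0 => h + t • w) ⁻¹' H) :=
    @Continuous.isOpen_preimage ℝ≥0 C scottNNReal _ _ hcont H hH
  have h0 : (0 : ℝ≥0) ∈ (fun t : ℝ≥0 => h + t • w) ⁻¹' H := by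
    simp only [Set.mem_preimage, zero_smul, add_zero]; exact hh
  have huniv := scott_zero_mem hopen h0
  have h1 : (1 : ℝ≥0) ∈ (fun t : ℝ≥0 => h + t • w) ⁻¹' H := huniv ▸ Set.mem_univ _
  simpa using h1

private lemma IsConvexSet.mem_sum {A : Set C} (hA : IsConvexSet A) {x y : C}
    (hx : x ∈ A) (hy : y ∈ A) {p q : ℝ≥0} (hpq : p + q = 1) : p • x + q • y ∈ A := by
  have hp : p ≤ 1 := hpq ▸ self_le_add_right p q
  have hq : 1 - p = q := by rw [← hpq, add_tsub_cancel_left]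
  have := hA x hx y hy p hp
  rwa [hq] at this

variable (H : Set C) in
/-- The "extension" of `H` by a point `p`: points `c` such that some convex combination
`r • c + r' • p` with `r > 0` lies in `H`. -/
private def Eset (p : C) : Set C :=
  {c | ∃ r r' : ℝ≥0, 0 < r ∧ r + r' = 1 ∧ r • c + r' • p ∈ H}

private lemma subset_Eset (H : Set C) (p : C) : H ⊆ Eset H p := by
  intro c hc
  exact ⟨1, 0, one_pos, add_zero 1, by simpa using hc⟩

private lemma self_mem_Eset {H : Set C} {p : C} (hp : p ∈ Eset H p) : p ∈ H := by
  obtain ⟨r, r', hr, hsum, hm⟩ := hp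
  rwa [← add_smul, hsum, one_smul] at hm

private lemma Eset_open (hsep : SeparatelyContinuousCone C) {H : Set C}
    (hH : IsOpen H) (p : C) : IsOpen (Eset H p) := by
  have : Eset H p = ⋃ r : ℝ≥0, ⋃ r' : ℝ≥0, ⋃ _ : 0 < r ∧ r + r' = 1,
      (fun c : C => r • c + r' • p) ⁻¹' H := by
    ext c
    simp only [Eset, Set.mem_setOf_eq, Set.mem_iUnion, Set.mem_preimage]
    exact ⟨fun ⟨r, r', h1, h2, h3⟩ => ⟨r, r', ⟨h1, h2⟩, h3⟩,
      fun ⟨r, r', ⟨h1, h2⟩, h3⟩ => ⟨r, r', h1, h2, h3⟩⟩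
  rw [this]
  refine isOpen_iUnion fun r => isOpen_iUnion fun r' => isOpen_iUnion fun _ => ?_
  have hc : Continuous fun c : C => r • c + r' • p := by
    have h1 : Continuous fun c : C => r' • p + r • c := (hsep.1 (r' • p)).comp (hsep.2.1 r)
    have : (fun c : C => r • c + r' • p) = fun c : C => r' • p + r • c :=
      funext fun c => add_comm _ _
    rw [this]; exact h1
  exact hc.isOpen_preimage H hH

private lemma Eset_convex {H : Set C} (hH : IsConvexSet H) (p : C) :
    IsConvexSet (Eset H p) := by
  intro c₁ hc₁ c₂ hc₂ t ht
  obtain ⟨r₁, r₁', hr₁, hs₁, hm₁⟩ := hc₁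
  obtain ⟨r₂, r₂', hr₂, hs₂, hm₂⟩ := hc₂
  set t' := 1 - t with ht'
  have htt' : t + t' = 1 := add_tsub_cancel_of_le ht
  set d := t * r₂ + t' * r₁ with hd
  have hdpos : 0 < d := by
    rcases eq_zero_or_pos t with rfl | htpos
    · have h1 : t' = 1 := by rw [ht', tsub_zero]
      rw [hd, h1, zero_mul, one_mul, zero_add]; exact hr₁
    · exact (mul_pos htpos hr₂).trans_le (self_le_add_right _ _)
  have hdne : d ≠ 0 := hdpos.ne'
  -- coefficient identities (proved by casting to ℝ)
  have e₁ : t * r₂ / d * r₁ = r₁ * r₂ / d * t := by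
    apply NNReal.coe_injective
    push_cast
    field_simp
  have e₂ : t' * r₁ / d * r₂ = r₁ * r₂ / d * t' := by
    apply NNReal.coe_injective
    push_cast
    field_simp
  have e₃ : t * r₂ / d * r₁' + t' * r₁ / d * r₂' = (t * r₂ * r₁' + t' * r₁ * r₂') / d := by
    apply NNReal.coe_injective
    push_cast
    field_simp
  have hlm : t * r₂ / d + t' * r₁ / d = 1 := by
    rw [← add_div, ← hd, div_self hdne]
  have hsum1 : r₁ * r₂ / d + (t * r₂ * r₁' + t' * r₁ * r₂') / d = 1 := by
    rw [← add_div, div_eq_one_iff_eq hdne, hd]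
    have hcast : (r₁ : ℝ) + r₁' = 1 := by exact_mod_cast hs₁
    have hcast2 : (r₂ : ℝ) + r₂' = 1 := by exact_mod_cast hs₂
    have hcast3 : (t : ℝ) + t' = 1 := by exact_mod_cast htt'
    apply NNReal.coe_injective
    push_cast
    linear_combination (t:ℝ) * r₂ * hcast + (t':ℝ) * r₁ * hcast2 - (r₁:ℝ) * r₂ * hcast3
  have key : (t * r₂ / d) • (r₁ • c₁ + r₁' • p) + (t' * r₁ / d) • (r₂ • c₂ + r₂' • p)
      = (r₁ * r₂ / d) • (t • c₁ + t' • c₂) + ((t * r₂ * r₁' + t' * r₁ * r₂') / d) • p := by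
    simp only [smul_add, smul_smul]
    rw [e₁, e₂, ← e₃, add_smul]
    abel
  refine ⟨r₁ * r₂ / d, (t * r₂ * r₁' + t' * r₁ * r₂') / d,
    div_pos (mul_pos hr₁ hr₂) hdpos, hsum1, ?_⟩
  rw [← key]
  exact IsConvexSet.mem_sum hH hm₁ hm₂ hlm

/-- Given an open convex half-space `H` not containing `0` in a semitopological cone,
the "Minkowski-type" functional of `H` is lower semicontinuous, linear, `≤ 1` outside `H`
and `> 1` on `H`. -/
private lemma exists_functional (hsep : SeparatelyContinuousCone C) {H : Set C}
    (hHopen : IsOpen H) (hHconv : IsConvexSet H) (hHc : IsConvexSet Hᶜ)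
    (h0 : (0 : C) ∉ H) :
    ∃ Λ : C → ℝ≥0∞, LowerSemicontinuous Λ ∧ IsLinearFunctional Λ ∧
      (∀ x ∉ H, Λ x ≤ 1) ∧ (∀ x ∈ H, 1 < Λ x) := by
  classical
  set S : C → Set ℝ≥0 := fun x => {r | 0 < r ∧ r⁻¹ • x ∈ H} with hS
  set Λ : C → ℝ≥0∞ := fun x => ⨆ r ∈ S x, (r : ℝ≥0∞) with hΛ
  have hle : ∀ {x : C} {r : ℝ≥0}, r ∈ S x → (r : ℝ≥0∞) ≤ Λ x := by
    intro x r hr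
    exact le_iSup₂ (f := fun (r : ℝ≥0) (_ : r ∈ S x) => (r : ℝ≥0∞)) r hr
  have hsup_le : ∀ {x : C} {c : ℝ≥0∞}, (∀ r ∈ S x, (r : ℝ≥0∞) ≤ c) → Λ x ≤ c :=
    fun h => iSup₂_le h
  have habs : ∀ {h : C}, h ∈ H → ∀ w, h + w ∈ H := fun hh w => open_absorb hsep hHopen hh w
  -- downward closedness of S x
  have hdown : ∀ {x : C} {r r' : ℝ≥0}, r ∈ S x → 0 < r' → r' ≤ r → r' ∈ S x := by
    rintro x r r' ⟨hrpos, hrH⟩ hr'pos hle'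
    refine ⟨hr'pos, ?_⟩
    by_contra hnot
    have hd1 : (r' / r) • (r'⁻¹ • x) + (1 - r' / r) • (0 : C) ∈ Hᶜ :=
      hHc _ hnot _ h0 _ ((div_le_one hrpos).2 hle')
    have hd2 : (r' / r) • (r'⁻¹ • x) + (1 - r' / r) • (0 : C) = r⁻¹ • x := by
      rw [smul_zero, add_zero, smul_smul]
      congr 1
      rw [div_mul_eq_mul_div, mul_inv_cancel₀ hr'pos.ne', one_div]
    exact hd1 (hd2 ▸ hrH)
  -- additivity of membership along sums
  have hcomb : ∀ {x y : C} {r s : ℝ≥0}, 0 < r → 0 < s →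
      (r / (r + s)) • (r⁻¹ • x) + (s / (r + s)) • (s⁻¹ • y) = (r + s)⁻¹ • (x + y) := by
    intro x y r s hr hs
    have h1 : r / (r + s) * r⁻¹ = (r + s)⁻¹ := by
      rw [div_mul_eq_mul_div, mul_inv_cancel₀ hr.ne', one_div]
    have h2 : s / (r + s) * s⁻¹ = (r + s)⁻¹ := by
      rw [div_mul_eq_mul_div, mul_inv_cancel₀ hs.ne', one_div]
    rw [smul_smul, smul_smul, h1, h2, smul_add]
  have hts : ∀ {r s : ℝ≥0}, 0 < r → r / (r + s) + s / (r + s) = 1 := by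
    intro r s hr
    rw [← add_div, div_self (by positivity)]
  have hSadd : ∀ {x : C} (y : C) {r : ℝ≥0}, r ∈ S x → r ∈ S (x + y) := by
    rintro x y r ⟨hrpos, hrH⟩
    exact ⟨hrpos, by rw [smul_add]; exact habs hrH _⟩
  have hSadd' : ∀ (x : C) {y : C} {r : ℝ≥0}, r ∈ S y → r ∈ S (x + y) := by
    intro x y r hr
    rw [add_comm]; exact hSadd x hr
  have hSsum : ∀ {x y : C} {r s : ℝ≥0}, r ∈ S x → s ∈ S y → r + s ∈ S (x + y) := by
    rintro x y r s ⟨hr, hrH⟩ ⟨hs, hsH⟩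
    refine ⟨by positivity, ?_⟩
    rw [← hcomb hr hs]
    exact IsConvexSet.mem_sum hHconv hrH hsH (hts hr)
  -- subadditivity
  have hsub : ∀ x y : C, Λ (x + y) ≤ Λ x + Λ y := by
    intro x y
    by_contra hlt
    push_neg at hlt
    have h' : Λ x + Λ y < ⨆ r ∈ S (x + y), (r : ℝ≥0∞) := hlt
    obtain ⟨m, hm'⟩ := lt_iSup_iff.mp h'
    obtain ⟨hmS, hm⟩ := lt_iSup_iff.mp hm'
    have hxt : Λ x < ⊤ :=
      lt_of_le_of_lt (le_of_le_of_eq (self_le_add_right _ _) rfl)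
        (hm.trans_le le_top)
    have hyt : Λ y < ⊤ :=
      lt_of_le_of_lt (self_le_add_left _ _) (hm.trans_le le_top)
    set A := (Λ x).toNNReal with hA'
    set B := (Λ y).toNNReal with hB'
    have hA : (A : ℝ≥0∞) = Λ x := ENNReal.coe_toNNReal hxt.ne
    have hB : (B : ℝ≥0∞) = Λ y := ENNReal.coe_toNNReal hyt.ne
    have hm2 : (A : ℝ≥0∞) + (B : ℝ≥0∞) < (m : ℝ≥0∞) := by rw [hA, hB]; exact hm
    have hAB : A + B < m := by exact_mod_cast hm2
    set e := m - (A + B) with he'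
    have he : 0 < e := tsub_pos_iff_lt.2 hAB
    have he2 : 0 < e / 2 := div_pos he (by norm_num)
    set r := A + e / 2 with hr'
    set s := B + e / 2 with hs'
    have hr : 0 < r := lt_of_lt_of_le he2 (le_add_self)
    have hs : 0 < s := lt_of_lt_of_le he2 (le_add_self)
    have hrs : r + s = m := by
      rw [hr', hs', add_add_add_comm]
      have : e / 2 + e / 2 = e := by
        apply NNReal.coe_injective; push_cast; ring
      rw [this, he', add_tsub_cancel_of_le hAB.le]
    have hxH : r⁻¹ • x ∉ H := by
      intro hmem
      have h1 : (r : ℝ≥0∞) ≤ Λ x := hle ⟨hr, hmem⟩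
      rw [← hA] at h1
      have h2 : r ≤ A := by exact_mod_cast h1
      exact absurd h2 (not_le.2 (lt_add_of_pos_right A he2))
    have hyH : s⁻¹ • y ∉ H := by
      intro hmem
      have h1 : (s : ℝ≥0∞) ≤ Λ y := hle ⟨hs, hmem⟩
      rw [← hB] at h1
      have h2 : s ≤ B := by exact_mod_cast h1
      exact absurd h2 (not_le.2 (lt_add_of_pos_right B he2))
    have hmem : (r + s)⁻¹ • (x + y) ∈ Hᶜ := by
      rw [← hcomb hr hs]
      exact IsConvexSet.mem_sum hHc hxH hyH (hts hr)
    rw [hrs] at hmem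
    exact hmem hmS.2
  -- superadditivity
  have hsuper : ∀ x y : C, Λ x + Λ y ≤ Λ (x + y) := by
    intro x y
    rcases Set.eq_empty_or_nonempty (S x) with hx | hx
    · have hx0 : Λ x = 0 := by rw [hΛ]; simp [hx]
      rw [hx0, zero_add]
      exact hsup_le fun r hr => hle (hSadd' x hr)
    rcases Set.eq_empty_or_nonempty (S y) with hy | hy
    · have hy0 : Λ y = 0 := by rw [hΛ]; simp [hy]
      rw [hy0, add_zero]
      exact hsup_le fun r hr => hle (hSadd y hr)
    refine ENNReal.biSup_add_biSup_le hx hy fun r hr s hs => ?_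
    calc (r : ℝ≥0∞) + (s : ℝ≥0∞) = ((r + s : ℝ≥0) : ℝ≥0∞) := by push_cast; ring
      _ ≤ Λ (x + y) := hle (hSsum hr hs)
  have haddi : ∀ x y : C, Λ (x + y) = Λ x + Λ y :=
    fun x y => le_antisymm (hsub x y) (hsuper x y)
  -- Λ 0 = 0
  have hzero : Λ 0 = 0 := by
    refine le_antisymm (hsup_le fun r hr => ?_) zero_le
    exact absurd (show (0 : C) ∈ H by simpa using hr.2) h0
  -- homogeneity
  have hhom : ∀ (c : ℝ≥0) (x : C), Λ (c • x) = (c : ℝ≥0∞) * Λ x := by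
    intro c x
    rcases eq_zero_or_pos c with rfl | hc
    · simp [hzero]
    apply le_antisymm
    · refine hsup_le fun r hr => ?_
      have hinv : (r / c)⁻¹ • x = r⁻¹ • (c • x) := by
        rw [smul_smul]
        congr 1
        rw [inv_div, div_eq_mul_inv, mul_comm]
      have hrc : r / c ∈ S x := ⟨div_pos hr.1 hc, by rw [hinv]; exact hr.2⟩
      have hcr : (r : ℝ≥0∞) = (c : ℝ≥0∞) * ((r / c : ℝ≥0) : ℝ≥0∞) := by
        have hcc : c * (r / c) = r := by
          rw [← mul_div_assoc, mul_div_cancel_left₀ _ hc.ne']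
        rw [← ENNReal.coe_mul, hcc]
      rw [hcr]
      exact mul_le_mul_right (hle hrc) _
    · have : Λ x = ⨆ r ∈ S x, (r : ℝ≥0∞) := rfl
      rw [this, ENNReal.mul_iSup]
      refine iSup_le fun r => ?_
      rw [ENNReal.mul_iSup]
      refine iSup_le fun hr => ?_
      have hmem : c * r ∈ S (c • x) := by
        refine ⟨mul_pos hc hr.1, ?_⟩
        have : (c * r)⁻¹ • (c • x) = r⁻¹ • x := by
          rw [smul_smul]
          congr 1
          rw [mul_comm c r, mul_inv, mul_assoc, inv_mul_cancel₀ hc.ne', mul_one]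
        rw [this]; exact hr.2
      calc (c : ℝ≥0∞) * (r : ℝ≥0∞) = ((c * r : ℝ≥0) : ℝ≥0∞) := by push_cast; ring
        _ ≤ Λ (c • x) := hle hmem
  -- lower semicontinuity
  have hlsc : LowerSemicontinuous Λ := by
    intro x y hy
    have hy' : y < ⨆ r ∈ S x, (r : ℝ≥0∞) := hy
    obtain ⟨r, hr⟩ := lt_iSup_iff.mp hy'
    obtain ⟨hrS, hyr⟩ := lt_iSup_iff.mp hr
    have hopen : IsOpen {x' : C | r⁻¹ • x' ∈ H} := (hsep.2.1 r⁻¹).isOpen_preimage H hHopen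
    filter_upwards [hopen.mem_nhds (show x ∈ _ from hrS.2)] with x' hx'
    exact lt_of_lt_of_le hyr (hle ⟨hrS.1, hx'⟩)
  have hlin : IsLinearFunctional Λ := by
    intro r s x y
    rw [haddi, hhom, hhom]
  refine ⟨Λ, hlsc, hlin, ?_, ?_⟩
  · intro x hx
    refine hsup_le fun r hr => ?_
    rw [ENNReal.coe_le_one_iff]
    by_contra h1
    push_neg at h1
    have h1S : (1 : ℝ≥0) ∈ S x := hdown hr one_pos h1.le
    exact hx (by simpa using h1S.2)
  · intro x hx
    have hcont := hsep.2.2 x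
    have hopen : TopologicalSpace.GenerateOpen {s | ∃ r : ℝ≥0, s = Set.Ioi r}
        ((fun t : ℝ≥0 => t • x) ⁻¹' H) :=
      @Continuous.isOpen_preimage ℝ≥0 C scottNNReal _ _ hcont H hHopen
    obtain ⟨t, ht0, ht1, htH⟩ := scott_one_mem hopen (by simpa using hx)
    have htS : t⁻¹ ∈ S x := ⟨inv_pos.2 ht0, by rw [inv_inv]; exact htH⟩
    calc (1 : ℝ≥0∞) < ((t⁻¹ : ℝ≥0) : ℝ≥0∞) := by
          exact_mod_cast (one_lt_inv₀ ht0).2 ht1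
      _ ≤ Λ x := hle htS

/-- The main separation step: if an open set contains `b` but not `a`, there is a lower
semicontinuous linear functional separating `a` from `b`. -/
private lemma main_sep (hsep : SeparatelyContinuousCone C) (hlc : LocallyConvexCone C)
    {a b : C} {U : Set C} (hUopen : IsOpen U) (hbU : b ∈ U) (haU : a ∉ U) :
    ∃ Λ : C → ℝ≥0∞, LowerSemicontinuous Λ ∧ IsLinearFunctional Λ ∧ Λ a ≠ Λ b := by
  obtain ⟨V, hVopen, hVconv, hbV, hVU⟩ := hlc b U hUopen hbU
  have haV : a ∉ V := fun h => haU (hVU h)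
  -- Zorn's lemma: a maximal open convex set containing `b` and avoiding `a`
  obtain ⟨H, -, hHmax⟩ := zorn_subset_nonempty
    {K : Set C | IsOpen K ∧ IsConvexSet K ∧ b ∈ K ∧ a ∉ K}
    (fun c hc hchain hne => by
      refine ⟨⋃₀ c, ⟨isOpen_sUnion fun s hs => (hc hs).1, ?_, ?_, ?_⟩,
        fun s hs => Set.subset_sUnion_of_mem hs⟩
      · rintro x ⟨s, hs, hxs⟩ y ⟨s', hs', hys⟩ t htle
        rcases hchain.total hs hs' with h | h
        · exact ⟨s', hs', (hc hs').2.1 x (h hxs) y hys t htle⟩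
        · exact ⟨s, hs, (hc hs).2.1 x hxs y (h hys) t htle⟩
      · obtain ⟨s, hs⟩ := hne
        exact ⟨s, hs, (hc hs).2.2.1⟩
      · rintro ⟨s, hs, has⟩
        exact (hc hs).2.2.2 has)
    V ⟨hVopen, hVconv, hbV, haV⟩
  obtain ⟨hHopen, hHconv, hbH, haH⟩ := hHmax.1
  have habs : ∀ {h : C}, h ∈ H → ∀ w, h + w ∈ H := fun hh w => open_absorb hsep hHopen hh w
  have h0H : (0 : C) ∉ H := fun h0 => haH (by simpa using habs h0 a)
  -- maximality: `Eset H a ⊆ H`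
  have haEa : a ∉ Eset H a := fun h => haH (self_mem_Eset h)
  have hEaH : Eset H a ⊆ H :=
    hHmax.2 ⟨Eset_open hsep hHopen a, Eset_convex hHconv a,
      subset_Eset H a hbH, haEa⟩ (subset_Eset H a)
  -- the complement of `H` is convex
  have hHc : IsConvexSet Hᶜ := by
    intro x hx y hy t ht
    by_contra hz
    rw [Set.mem_compl_iff, not_not] at hz
    rcases eq_zero_or_pos t with rfl | htpos
    · exact hy (by simpa using hz)
    rcases ht.lt_or_eq with htlt | rfl
    swap
    · exact hx (by simpa using hz)
    -- `y ∈ Eset H x`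
    have hyEx : y ∈ Eset H x :=
      ⟨1 - t, t, tsub_pos_iff_lt.2 htlt, tsub_add_cancel_of_le ht, by rwa [add_comm]⟩
    -- `a ∈ Eset H x`, otherwise maximality forces `Eset H x ⊆ H`, contradicting `y ∉ H`
    have haEx : a ∈ Eset H x := by
      by_contra haEx
      have hsub : Eset H x ⊆ H :=
        hHmax.2 ⟨Eset_open hsep hHopen x, Eset_convex hHconv x,
          subset_Eset H x hbH, haEx⟩ (subset_Eset H x)
      exact hy (hsub hyEx)
    obtain ⟨r₁, r₁', hr₁, hs₁, hm₁⟩ := haEx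
    rcases eq_zero_or_pos r₁' with rfl | hr₁'
    · rw [add_zero] at hs₁
      exact haH (by rw [hs₁] at hm₁; simpa using hm₁)
    exact hx (hEaH ⟨r₁', r₁, hr₁', by rwa [add_comm], by rwa [add_comm]⟩)
  obtain ⟨Λ, hlsc, hlin, hout, hin⟩ := exists_functional hsep hHopen hHconv hHc h0H
  exact ⟨Λ, hlsc, hlin, ((hout a haH).trans_lt (hin b hbH)).ne⟩

end Aux

/-- Every locally convex semitopological cone is convex-T0: any two distinct points are
separated by a lower semicontinuous linear functional `Λ : C → [0,∞]`. -/
theorem locallyConvex_convexT0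
    (C : Type*) [AddCommMonoid C] [Module ℝ≥0 C] [TopologicalSpace C] [T0Space C]
    (hsep : SeparatelyContinuousCone C) (hlc : LocallyConvexCone C) :
    ConvexT0 C := by
  intro a b hab
  obtain ⟨U, hUopen, hU⟩ := exists_isOpen_xor'_mem hab
  rcases hU with ⟨haU, hbU⟩ | ⟨hbU, haU⟩
  · obtain ⟨Λ, hlsc, hlin, hne⟩ := main_sep hsep hlc hUopen haU hbU
    exact ⟨Λ, hlsc, hlin, hne.symm⟩
  · exact main_sep hsep hlc hUopen hbU haU
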